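/- Truncation in the asymmetric system N_{(5,4)} can fail to give a nearest multiple of 100: there exists an eventually zero c : ℕ → ℤ with −5 ≤ c i ≤ 4 for all i such that, setting n = Σ_i c i · 10^i and m = Σ_{i ≥ 2} c i · 10^i, one has |n − m| > 50; in particular m is not a nearest multiple of 100 to n. (A witness is n = 145 with digits c 0 = −5, c 1 = −5, c 2 = 2, for which m = 200 while the nearest multiple of 100 is 100.) -/

import Mathlib

/-- Truncation in the asymmetric system N_{(5,4)} can fail to give a nearest
multiple of 100: for some digit sequence, the truncated value m satisfies
|n − m| > 50. -/
theorem truncation_fails_N54 :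
    ∃ c : ℕ → ℤ, (∃ N, ∀ i, N ≤ i → c i = 0) ∧
      (∀ i, -5 ≤ c i ∧ c i ≤ 4) ∧
      |(∑ᶠ i, c i * 10 ^ i) - ∑ᶠ i, c (i + 2) * 10 ^ (i + 2)| > 50 := by
  refine ⟨fun i => if i = 0 then -5 else if i = 1 then -5 else if i = 2 then 2 else 0,
    ⟨3, fun i hi => ?_⟩, fun i => ?_, ?_⟩
  · have h0 : i ≠ 0 := by omega
    have h1 : i ≠ 1 := by omega
    have h2 : i ≠ 2 := by omega
    simp [h0, h1, h2]
  · rcases i with _ | _ | _ | i <;> simp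
  · have h1 : (∑ᶠ i, (if i = 0 then (-5:ℤ) else if i = 1 then -5 else if i = 2 then 2 else 0) * 10 ^ i)
        = ∑ i ∈ Finset.range 3, (if i = 0 then (-5:ℤ) else if i = 1 then -5 else if i = 2 then 2 else 0) * 10 ^ i := by
      apply finsum_eq_finset_sum_of_support_subset
      intro i hi
      simp only [Function.mem_support] at hi
      simp only [Finset.coe_range, Set.mem_Iio]
      by_contra h
      have h0 : i ≠ 0 := by omega
      have hh1 : i ≠ 1 := by omega
      have h2 : i ≠ 2 := by omega
      simp [h0, hh1, h2] at hi
    have h2 : (∑ᶠ i, (if i + 2 = 0 then (-5:ℤ) else if i + 2 = 1 then -5 else if i + 2 = 2 then 2 else 0) * 10 ^ (i + 2))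
        = ∑ i ∈ Finset.range 1, (if i + 2 = 0 then (-5:ℤ) else if i + 2 = 1 then -5 else if i + 2 = 2 then 2 else 0) * 10 ^ (i + 2) := by
      apply finsum_eq_finset_sum_of_support_subset
      intro i hi
      simp only [Function.mem_support] at hi
      simp only [Finset.coe_range, Set.mem_Iio]
      by_contra h
      have h2 : i + 2 ≠ 2 := by omega
      simp [h2] at hi
      omega
    rw [h1, h2]
    decide
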